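/- Let f(x) = ∑_{j=0}^{k} d_j x^j ∈ ℤ[x] with d_0 d_k ≠ 0, let p be a prime, and suppose the Newton polygon of f with respect to p consists of two segments: one from (0,1) to (u,0) and one from (u,0) to (k,1), where 0 < u < k. Then f is either irreducible over ℚ, or f is the product of an irreducible polynomial of degree u and an irreducible polynomial of degree k-u. -/

import Mathlib

open Polynomial

section NPAux

variable {p : ℕ}

private lemma np_rev_primitive {Q : ℤ[X]} (hQ : Q.IsPrimitive) : Q.reverse.IsPrimitive := by
  rw [isPrimitive_iff_isUnit_of_C_dvd] at hQ ⊢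
  intro r hr
  apply hQ
  rw [C_dvd_iff_dvd_coeff] at hr ⊢
  intro i
  by_cases hi : i ≤ Q.natDegree
  · have := hr (Q.natDegree - i)
    rwa [coeff_reverse, revAt_le (Nat.sub_le _ _), Nat.sub_sub_self hi] at this
  · rw [coeff_eq_zero_of_natDegree_lt (lt_of_not_ge hi)]
    exact dvd_zero r

private lemma np_unit_of_reverse_unit {a : ℤ[X]} (ha0 : a.coeff 0 ≠ 0)
    (h : IsUnit a.reverse) : IsUnit a := by
  have htd : a.natTrailingDegree = 0 := by
    rw [natTrailingDegree_eq_zero]; exact Or.inr ha0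
  have hnd : a.natDegree = 0 := by
    have := a.natDegree_eq_reverse_natDegree_add_natTrailingDegree
    rw [natDegree_eq_zero_of_isUnit h, htd] at this
    simpa using this
  have haC : a = C (a.coeff 0) := eq_C_of_natDegree_eq_zero hnd
  have hrev : a.reverse = a := by
    rw [haC]
    exact reverse_C _
  rwa [hrev] at h

private lemma np_irreducible_of_reverse {Q : ℤ[X]} (h0 : Q.coeff 0 ≠ 0)
    (hd : 0 < Q.natDegree) (hirr : Irreducible Q.reverse) : Irreducible Q := by
  constructor
  · intro hQu
    rw [natDegree_eq_zero_of_isUnit hQu] at hd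
    exact lt_irrefl 0 hd
  · intro a b hab
    have hab0 : a.coeff 0 * b.coeff 0 ≠ 0 := by
      rw [← mul_coeff_zero, ← hab]; exact h0
    have ha0 : a.coeff 0 ≠ 0 := fun h => hab0 (by rw [h, zero_mul])
    have hb0 : b.coeff 0 ≠ 0 := fun h => hab0 (by rw [h, mul_zero])
    have hrev : Q.reverse = a.reverse * b.reverse := by
      rw [hab, reverse_mul_of_domain]
    rcases hirr.isUnit_or_isUnit hrev with h | h
    · exact Or.inl (np_unit_of_reverse_unit ha0 h)
    · exact Or.inr (np_unit_of_reverse_unit hb0 h)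

private lemma np_eisenstein_irred (hp : p.Prime) {B : ℤ[X]} (hprim : B.IsPrimitive)
    (hd : 0 < B.natDegree) (hlc : ¬ (p : ℤ) ∣ B.leadingCoeff)
    (hcoef : ∀ j < B.natDegree, (p : ℤ) ∣ B.coeff j)
    (h02 : ¬ (p : ℤ) ^ 2 ∣ B.coeff 0) : Irreducible B := by
  have hE : B.IsEisensteinAt (Ideal.span {(p : ℤ)}) :=
    { leading := by rwa [Ideal.mem_span_singleton]
      mem := fun {n} hn => Ideal.mem_span_singleton.mpr (hcoef n hn)
      notMem := by
        rw [Ideal.span_singleton_pow, Ideal.mem_span_singleton]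
        exact h02 }
  refine hE.irreducible ?_ hprim hd
  rw [Ideal.span_singleton_prime (by exact_mod_cast hp.ne_zero)]
  exact Nat.prime_iff_prime_int.mp hp

private lemma np_rev_eisenstein_irred (hp : p.Prime) {A : ℤ[X]} (hprim : A.IsPrimitive)
    (hd : 0 < A.natDegree) (h00 : ¬ (p : ℤ) ∣ A.coeff 0)
    (hcoef : ∀ j, 1 ≤ j → (p : ℤ) ∣ A.coeff j)
    (hlc2 : ¬ (p : ℤ) ^ 2 ∣ A.leadingCoeff) : Irreducible A := by
  have h0 : A.coeff 0 ≠ 0 := fun h => h00 (h ▸ dvd_zero _)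
  have htd : A.natTrailingDegree = 0 := by
    rw [natTrailingDegree_eq_zero]; exact Or.inr h0
  have hrd : A.reverse.natDegree = A.natDegree := by
    rw [reverse_natDegree, htd, Nat.sub_zero]
  apply np_irreducible_of_reverse h0 hd
  apply np_eisenstein_irred hp (np_rev_primitive hprim)
  · rw [hrd]; exact hd
  · rw [reverse_leadingCoeff, trailingCoeff, htd]; exact h00
  · intro j hj
    rw [hrd] at hj
    rw [coeff_reverse, revAt_le (le_of_lt hj)]
    exact hcoef _ (by omega)
  · rw [coeff_zero_reverse]; exact hlc2

/-- The key mod-p structure lemma. -/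
private lemma np_key (hp : p.Prime) {k u : ℕ} (hu : 0 < u) (huk : u < k)
    {A B : ℤ[X]} (hA : A ≠ 0) (hB : B ≠ 0)
    (hmA : 0 < A.natDegree)
    (hdeg : (A * B).natDegree = k)
    (hmid : ¬ (p : ℤ) ∣ (A * B).coeff u)
    (hdvd : ∀ j, j ≤ k → j ≠ u → (p : ℤ) ∣ (A * B).coeff j)
    (hk2 : ¬ (p : ℤ) ^ 2 ∣ (A * B).leadingCoeff)
    (h02 : ¬ (p : ℤ) ^ 2 ∣ (A * B).coeff 0)
    (hA0 : ¬ (p : ℤ) ∣ A.coeff 0) :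
    A.natDegree = k - u ∧ B.natDegree = u ∧
      (¬ (p : ℤ) ∣ B.leadingCoeff) ∧ (∀ j < u, (p : ℤ) ∣ B.coeff j) ∧
      (¬ (p : ℤ) ^ 2 ∣ B.coeff 0) ∧
      (∀ j, 1 ≤ j → (p : ℤ) ∣ A.coeff j) ∧ (¬ (p : ℤ) ^ 2 ∣ A.leadingCoeff) := by
  haveI : Fact p.Prime := ⟨hp⟩
  set π := Int.castRingHom (ZMod p) with hπ
  have hcast : ∀ z : ℤ, π z = 0 ↔ (p : ℤ) ∣ z := by
    intro z
    simpa using ZMod.intCast_zmod_eq_zero_iff_dvd z p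
  set a' : ZMod p := π ((A * B).coeff u) with ha'
  have ha'0 : a' ≠ 0 := fun h => hmid ((hcast _).mp h)
  -- the product maps to a constant times X^u
  have hfbar : (A * B).map π = C a' * X ^ u := by
    ext n
    rw [coeff_map, coeff_C_mul, coeff_X_pow]
    by_cases hn : n = u
    · subst hn; simp [ha']
    · rw [if_neg hn, mul_zero]
      by_cases hnk : n ≤ k
      · exact (hcast _).mpr (hdvd n hnk hn)
      · rw [coeff_eq_zero_of_natDegree_lt (by omega : (A * B).natDegree < n)]
        simp
  have hprod : A.map π * B.map π = C a' * X ^ u := by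
    rw [← Polynomial.map_mul, hfbar]
  -- A.map π divides X^u
  have hCa'unit : IsUnit (C a') := isUnit_C.mpr ha'0.isUnit
  have hdvdX : A.map π ∣ X ^ u := by
    have h1 : A.map π ∣ C a' * X ^ u := ⟨B.map π, hprod.symm⟩
    exact h1.trans (hCa'unit.mul_left_dvd.mpr dvd_rfl)
  obtain ⟨s, hsu, w, hw⟩ := (dvd_prime_pow Polynomial.prime_X u).mp hdvdX
  obtain ⟨r, hru, hrC⟩ := Polynomial.isUnit_iff.mp w.isUnit
  have hA0' : (A.map π).coeff 0 ≠ 0 := by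
    rw [coeff_map]; exact fun h => hA0 ((hcast _).mp h)
  have hr0 : r ≠ 0 := hru.ne_zero
  -- s = 0, so A.map π is a unit
  have hs0 : s = 0 := by
    by_contra hs
    have h1 : (A.map π * ↑w).coeff 0 = 0 := by
      rw [hw, coeff_X_pow, if_neg (by omega : (0 : ℕ) ≠ s)]
    rw [← hrC, coeff_mul_C] at h1
    exact hA0' (by
      rcases mul_eq_zero.mp h1 with h | h
      · exact h
      · exact absurd h hr0)
  have hAunit : IsUnit (A.map π) := by
    rw [hs0, pow_zero] at hw
    exact IsUnit.of_mul_eq_one _ hw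
  have hAnd0 : (A.map π).natDegree = 0 := natDegree_eq_zero_of_isUnit hAunit
  -- p divides lc A
  have hlcA : (p : ℤ) ∣ A.leadingCoeff := by
    by_contra h
    have : (A.map π).natDegree = A.natDegree :=
      natDegree_map_of_leadingCoeff_ne_zero π (fun hh => h ((hcast _).mp hh))
    omega
  have hlcmul : (A * B).leadingCoeff = A.leadingCoeff * B.leadingCoeff := leadingCoeff_mul A B
  have hlcB : ¬ (p : ℤ) ∣ B.leadingCoeff := by
    intro h
    apply hk2
    rw [hlcmul, pow_two]
    exact mul_dvd_mul hlcA h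
  have hlcA2 : ¬ (p : ℤ) ^ 2 ∣ A.leadingCoeff := by
    intro h
    exact hk2 (hlcmul ▸ h.trans (Dvd.intro _ rfl))
  -- degrees
  have hBbar0 : B.map π ≠ 0 := by
    intro h
    have : C a' * X ^ u = 0 := by rw [← hprod, h, mul_zero]
    exact ha'0 (by
      have := congrArg (fun q => Polynomial.coeff q u) this
      simpa [coeff_C_mul, coeff_X_pow] using this)
  have hBd : (B.map π).natDegree = B.natDegree :=
    natDegree_map_of_leadingCoeff_ne_zero π (fun hh => hlcB ((hcast _).mp hh))
  have hndB : B.natDegree = u := by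
    have h1 : (A.map π * B.map π).natDegree = (A.map π).natDegree + (B.map π).natDegree :=
      natDegree_mul hAunit.ne_zero hBbar0
    have h2 : (C a' * X ^ u).natDegree = u := by
      rw [natDegree_mul (fun h => ha'0 (by simpa using congrArg (fun q => Polynomial.coeff q 0) h)) (pow_ne_zero u X_ne_zero), natDegree_C, natDegree_X_pow, zero_add]
    rw [hprod, h2] at h1
    omega
  have hndA : A.natDegree = k - u := by
    have := natDegree_mul hA hB
    omega
  -- coefficients of A
  have hAco : ∀ j, 1 ≤ j → (p : ℤ) ∣ A.coeff j := by
    intro j hj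
    have : (A.map π).coeff j = 0 := coeff_eq_zero_of_natDegree_lt (by omega)
    rw [coeff_map] at this
    exact (hcast _).mp this
  -- coefficients of B below u
  have hr₀ : (A.map π).coeff 0 ≠ 0 := hA0'
  have hAC : A.map π = C ((A.map π).coeff 0) := eq_C_of_natDegree_eq_zero hAnd0
  have hBco : ∀ j < u, (p : ℤ) ∣ B.coeff j := by
    intro j hj
    have h1 : (A.map π * B.map π).coeff j = 0 := by
      rw [hprod, coeff_C_mul, coeff_X_pow, if_neg (by omega : j ≠ u), mul_zero]
    rw [hAC, coeff_C_mul] at h1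
    rcases mul_eq_zero.mp h1 with h | h
    · exact absurd h hr₀
    · rw [coeff_map] at h
      exact (hcast _).mp h
  -- constant coefficient of B
  have hfc0 : (A * B).coeff 0 = A.coeff 0 * B.coeff 0 := mul_coeff_zero A B
  have hB02 : ¬ (p : ℤ) ^ 2 ∣ B.coeff 0 := by
    intro h
    exact h02 (hfc0 ▸ h.trans (Dvd.intro_left _ rfl))
  exact ⟨hndA, hndB, hlcB, hBco, hB02, hAco, hlcA2⟩

end NPAux

open Polynomial in
theorem newton_polygon_two_segments (k u : ℕ) (hu : 0 < u) (huk : u < k) (p : ℕ)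
    (hp : p.Prime) (f : ℤ[X]) (hdeg : f.natDegree = k) (h0 : f.coeff 0 ≠ 0)
    (hv0 : padicValInt p (f.coeff 0) = 1)
    (hvk : padicValInt p (f.coeff k) = 1)
    (hvu : f.coeff u ≠ 0 ∧ padicValInt p (f.coeff u) = 0)
    (hlow : ∀ j ≤ u, f.coeff j ≠ 0 → u - j ≤ u * padicValInt p (f.coeff j))
    (hhigh : ∀ j, u ≤ j → j ≤ k → f.coeff j ≠ 0 →
      j - u ≤ (k - u) * padicValInt p (f.coeff j)) :
    Irreducible (f.map (Int.castRingHom ℚ)) ∨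
      ∃ g h : ℚ[X], Irreducible g ∧ Irreducible h ∧ g.natDegree = u ∧ h.natDegree = k - u ∧
        f.map (Int.castRingHom ℚ) = g * h := by
  haveI : Fact p.Prime := ⟨hp⟩
  by_cases hFi : Irreducible (f.map (Int.castRingHom ℚ))
  · exact Or.inl hFi
  right
  have hf0 : f ≠ 0 := fun h => h0 (by simp [h])
  -- translate the valuation hypotheses into divisibility statements
  have hmid : ¬ (p : ℤ) ∣ f.coeff u := by
    intro hd
    rcases (padicValInt_dvd_iff 1 (f.coeff u)).mp (by simpa using hd) with h | h
    · exact hvu.1 h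
    · rw [hvu.2] at h; omega
  have hpd : ∀ j, j ≤ k → j ≠ u → (p : ℤ) ∣ f.coeff j := by
    intro j hj hju
    rcases eq_or_ne (f.coeff j) 0 with h | h
    · simp [h]
    have hv1 : 1 ≤ padicValInt p (f.coeff j) := by
      rcases lt_or_gt_of_ne hju with hlt | hgt
      · have := hlow j (le_of_lt hlt) h
        rcases Nat.eq_zero_or_pos (padicValInt p (f.coeff j)) with h0' | h0'
        · rw [h0'] at this; omega
        · exact h0'
      · have := hhigh j (le_of_lt hgt) hj h
        rcases Nat.eq_zero_or_pos (padicValInt p (f.coeff j)) with h0' | h0'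
        · rw [h0'] at this; omega
        · exact h0'
    have := (padicValInt_dvd_iff 1 (f.coeff j)).mpr (Or.inr hv1)
    simpa using this
  have h02 : ¬ (p : ℤ) ^ 2 ∣ f.coeff 0 := by
    intro hd
    rcases (padicValInt_dvd_iff 2 (f.coeff 0)).mp hd with h | h
    · exact h0 h
    · rw [hv0] at h; omega
  have hlcf : f.leadingCoeff = f.coeff k := by rw [Polynomial.leadingCoeff, hdeg]
  have hk0 : f.coeff k ≠ 0 := by
    rw [← hlcf]; exact leadingCoeff_ne_zero.mpr hf0
  have hk2 : ¬ (p : ℤ) ^ 2 ∣ f.coeff k := by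
    intro hd
    rcases (padicValInt_dvd_iff 2 (f.coeff k)).mp hd with h | h
    · exact hk0 h
    · rw [hvk] at h; omega
  -- content and primitive part
  set c : ℤ := f.content with hc
  set f₀ : ℤ[X] := f.primPart with hf₀
  have hfc : f = C c * f₀ := f.eq_C_content_mul_primPart
  have hc0 : c ≠ 0 := fun h => hf0 (content_eq_zero_iff.mp h)
  have hpc : ¬ (p : ℤ) ∣ c := fun h => hmid (h.trans (content_dvd_coeff u))
  have hcQ : (c : ℚ) ≠ 0 := Int.cast_ne_zero.mpr hc0
  have hCcQunit : IsUnit (C (c : ℚ)) := isUnit_C.mpr hcQ.isUnit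
  have hprim₀ : f₀.IsPrimitive := f.isPrimitive_primPart
  have hmapf : f.map (Int.castRingHom ℚ) = C (c : ℚ) * f₀.map (Int.castRingHom ℚ) := by
    rw [hfc, Polynomial.map_mul, map_C]
    simp
  -- f₀ is not irreducible
  have hnd₀ : f₀.natDegree = k := by rw [hf₀, natDegree_primPart, hdeg]
  have hf₀nu : ¬ IsUnit f₀ := by
    intro h
    have := natDegree_eq_zero_of_isUnit h
    omega
  have hf₀ni : ¬ Irreducible f₀ := by
    intro h
    apply hFi
    rw [hmapf]
    have hmi : Irreducible (f₀.map (Int.castRingHom ℚ)) :=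
      (Polynomial.IsPrimitive.Int.irreducible_iff_irreducible_map_cast hprim₀).mp h
    have hassoc : Associated (f₀.map (Int.castRingHom ℚ)) (C (c : ℚ) * f₀.map (Int.castRingHom ℚ)) :=
      ⟨hCcQunit.unit, by rw [mul_comm, IsUnit.unit_spec]⟩
    exact hassoc.irreducible hmi
  have hex : ∃ a b : ℤ[X], f₀ = a * b ∧ ¬ IsUnit a ∧ ¬ IsUnit b := by
    have h1 : ¬ (∀ a b : ℤ[X], f₀ = a * b → IsUnit a ∨ IsUnit b) :=
      fun h => hf₀ni ⟨hf₀nu, h⟩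
    push_neg at h1
    obtain ⟨a, b, hab, ha, hb⟩ := h1
    exact ⟨a, b, hab, ha, hb⟩
  obtain ⟨a, b, hab, hua, hub⟩ := hex
  have hf₀0 : f₀ ≠ 0 := hprim₀.ne_zero
  have ha0 : a ≠ 0 := fun h => hf₀0 (by rw [hab, h, zero_mul])
  have hb0 : b ≠ 0 := fun h => hf₀0 (by rw [hab, h, mul_zero])
  have haprim : a.IsPrimitive := isPrimitive_of_dvd hprim₀ ⟨b, hab⟩
  have hbprim : b.IsPrimitive := isPrimitive_of_dvd hprim₀ ⟨a, by rw [hab, mul_comm]⟩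
  have hand : 0 < a.natDegree := by
    rcases Nat.eq_zero_or_pos a.natDegree with h | h
    · exfalso
      apply hua
      have haC : a = C (a.coeff 0) := eq_C_of_natDegree_eq_zero h
      have : IsUnit (a.coeff 0) :=
        isPrimitive_iff_isUnit_of_C_dvd.mp haprim _ (haC ▸ dvd_rfl)
      exact haC ▸ isUnit_C.mpr this
    · exact h
  have hbnd : 0 < b.natDegree := by
    rcases Nat.eq_zero_or_pos b.natDegree with h | h
    · exfalso
      apply hub
      have hbC : b = C (b.coeff 0) := eq_C_of_natDegree_eq_zero h
      have : IsUnit (b.coeff 0) :=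
        isPrimitive_iff_isUnit_of_C_dvd.mp hbprim _ (hbC ▸ dvd_rfl)
      exact hbC ▸ isUnit_C.mpr this
    · exact h
  -- basic facts about the factorization f = (C c * a) * b
  have hCca0 : C c * a ≠ 0 := mul_ne_zero (fun h => hc0 (by simpa using h)) ha0
  have hfab : f = (C c * a) * b := by rw [hfc, hab, mul_assoc]
  have hndCca : (C c * a).natDegree = a.natDegree := by
    rw [natDegree_mul (fun h => hc0 (by simpa using h)) ha0, natDegree_C, zero_add]
  have hlcCca : (C c * a).leadingCoeff = c * a.leadingCoeff := by
    rw [leadingCoeff_mul, leadingCoeff_C]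
  have hab_nd : a.natDegree + b.natDegree = k := by
    have := natDegree_mul ha0 hb0
    rw [← hab, hnd₀] at this
    omega
  -- p divides exactly one of the constant terms
  have hpf0 : (p : ℤ) ∣ f.coeff 0 := hpd 0 (by omega) (by omega)
  have hf00 : f.coeff 0 = (C c * a).coeff 0 * b.coeff 0 := by
    rw [hfab, mul_coeff_zero]
  have hpint : Prime (p : ℤ) := Nat.prime_iff_prime_int.mp hp
  -- helper to build the final answer from the two irreducible integer factors
  have hmapdeg : ∀ q : ℤ[X], (q.map (Int.castRingHom ℚ)).natDegree = q.natDegree := by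
    intro q
    apply natDegree_map_eq_of_injective
    intro x y hxy
    simpa using hxy
  by_cases hA0 : (p : ℤ) ∣ (C c * a).coeff 0
  · -- p divides (C c * a)(0), so p does not divide b(0); apply key with A := b
    have hb00 : ¬ (p : ℤ) ∣ b.coeff 0 := by
      intro h
      apply h02
      rw [hf00, pow_two]
      exact mul_dvd_mul hA0 h
    have hfab' : f = b * (C c * a) := by rw [hfab, mul_comm]
    obtain ⟨hndb, hndCa, hlcB, hBco, hB02, hAco, hlcA2⟩ :=
      np_key hp hu huk hb0 hCca0 hbnd
        (by rw [← hfab']; exact hdeg)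
        (by rw [← hfab']; exact hmid)
        (by rw [← hfab']; exact hpd)
        (by rw [← hfab', hlcf]; exact hk2)
        (by rw [← hfab']; exact h02)
        hb00
    -- b has degree k - u, reverse-Eisenstein; a has degree u, Eisenstein
    have hnda : a.natDegree = u := by rw [← hndCca]; exact hndCa
    -- transfer Eisenstein data from C c * a to a
    have halc : ¬ (p : ℤ) ∣ a.leadingCoeff := by
      intro h
      exact hlcB (hlcCca ▸ Dvd.dvd.mul_left h c)
    have haco : ∀ j < a.natDegree, (p : ℤ) ∣ a.coeff j := by
      intro j hj
      have := hBco j (by omega)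
      rw [coeff_C_mul] at this
      exact (hpint.dvd_mul.mp this).resolve_left hpc
    have ha02 : ¬ (p : ℤ) ^ 2 ∣ a.coeff 0 := by
      intro h
      apply hB02
      rw [coeff_C_mul]
      exact h.mul_left c
    have hairr : Irreducible a :=
      np_eisenstein_irred hp haprim (by omega) halc haco ha02
    -- b is reverse-Eisenstein
    have hbirr : Irreducible b :=
      np_rev_eisenstein_irred hp hbprim hbnd hb00 hAco hlcA2
    refine ⟨C (c : ℚ) * a.map (Int.castRingHom ℚ), b.map (Int.castRingHom ℚ), ?_, ?_, ?_, ?_, ?_⟩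
    · have hmi : Irreducible (a.map (Int.castRingHom ℚ)) :=
        (Polynomial.IsPrimitive.Int.irreducible_iff_irreducible_map_cast haprim).mp hairr
      have hassoc2 : Associated (a.map (Int.castRingHom ℚ))
          (C (c : ℚ) * a.map (Int.castRingHom ℚ)) :=
        ⟨hCcQunit.unit, by rw [mul_comm, IsUnit.unit_spec]⟩
      exact hassoc2.irreducible hmi
    · exact (Polynomial.IsPrimitive.Int.irreducible_iff_irreducible_map_cast hbprim).mp hbirr
    · rw [natDegree_mul (fun h => hcQ (by simpa using h))
        (fun h => ha0 (by simpa [Polynomial.map_eq_zero_iff (by intro x y hxy; simpa using hxy : Function.Injective (Int.castRingHom ℚ))] using h)),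
        natDegree_C, zero_add, hmapdeg, hnda]
    · rw [hmapdeg, hndb]
    · rw [hfab, Polynomial.map_mul, Polynomial.map_mul, map_C]
      simp only [Int.coe_castRingHom]
      try ring
  · -- p does not divide (C c * a)(0); apply key with A := C c * a
    obtain ⟨hndCa, hndb, hlcB, hBco, hB02, hAco, hlcA2⟩ :=
      np_key hp hu huk hCca0 hb0 (by omega : 0 < (C c * a).natDegree)
        (by rw [← hfab]; exact hdeg)
        (by rw [← hfab]; exact hmid)
        (by rw [← hfab]; exact hpd)
        (by rw [← hfab, hlcf]; exact hk2)
        (by rw [← hfab]; exact h02)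
        hA0
    have hnda : a.natDegree = k - u := by rw [← hndCca]; exact hndCa
    -- a is reverse-Eisenstein
    have ha00 : ¬ (p : ℤ) ∣ a.coeff 0 := by
      intro h
      apply hA0
      rw [coeff_C_mul]
      exact h.mul_left c
    have haco : ∀ j, 1 ≤ j → (p : ℤ) ∣ a.coeff j := by
      intro j hj
      have := hAco j hj
      rw [coeff_C_mul] at this
      exact (hpint.dvd_mul.mp this).resolve_left hpc
    have halc2 : ¬ (p : ℤ) ^ 2 ∣ a.leadingCoeff := by
      intro h
      apply hlcA2
      rw [hlcCca]
      exact h.mul_left c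
    have hairr : Irreducible a :=
      np_rev_eisenstein_irred hp haprim (by omega) ha00 haco halc2
    -- b is Eisenstein of degree u
    have hbirr : Irreducible b :=
      np_eisenstein_irred hp hbprim (by omega) hlcB (by rw [hndb]; exact hBco) hB02
    refine ⟨b.map (Int.castRingHom ℚ), C (c : ℚ) * a.map (Int.castRingHom ℚ), ?_, ?_, ?_, ?_, ?_⟩
    · exact (Polynomial.IsPrimitive.Int.irreducible_iff_irreducible_map_cast hbprim).mp hbirr
    · have hmi : Irreducible (a.map (Int.castRingHom ℚ)) :=
        (Polynomial.IsPrimitive.Int.irreducible_iff_irreducible_map_cast haprim).mp hairr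
      have hassoc2 : Associated (a.map (Int.castRingHom ℚ))
          (C (c : ℚ) * a.map (Int.castRingHom ℚ)) :=
        ⟨hCcQunit.unit, by rw [mul_comm, IsUnit.unit_spec]⟩
      exact hassoc2.irreducible hmi
    · rw [hmapdeg, hndb]
    · rw [natDegree_mul (fun h => hcQ (by simpa using h))
        (fun h => ha0 (by simpa [Polynomial.map_eq_zero_iff (by intro x y hxy; simpa using hxy : Function.Injective (Int.castRingHom ℚ))] using h)),
        natDegree_C, zero_add, hmapdeg, hnda]
    · rw [hfab, Polynomial.map_mul, Polynomial.map_mul, map_C]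
      simp only [Int.coe_castRingHom]
      try ring
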